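/- Let φ : ℝ → ℂ be continuous with φ(0) = 1, nonvanishing, satisfying φ(2t) = φ(t)³ conj(φ(t)), and with second-order expansion φ(t) = 1 − t²/2 + o(t²) near 0. Then φ(t) = exp(−t²/2) for all t ∈ ℝ. -/

import Mathlib

open Complex Filter

lemma aux_log {x : ℝ} (hx : |x - 1| ≤ 1/2) : |Real.log x| ≤ 2 * |x - 1| := by
  have hab := abs_le.1 hx
  have hx1 : (1:ℝ)/2 ≤ x := by linarith [hab.1]
  have hx0 : 0 < x := by linarith
  have h1 : Real.log x ≤ x - 1 := Real.log_le_sub_one_of_pos hx0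
  have h2 : Real.log x⁻¹ ≤ x⁻¹ - 1 := Real.log_le_sub_one_of_pos (by positivity)
  rw [Real.log_inv] at h2
  have h3 : x * x⁻¹ = 1 := mul_inv_cancel₀ hx0.ne'
  rw [abs_le]
  rcases le_or_gt 1 x with h | h
  · rw [_root_.abs_of_nonneg (by linarith : (0:ℝ) ≤ x - 1)]
    have := Real.log_nonneg h
    constructor <;> linarith
  · rw [_root_.abs_of_neg (by linarith : x - 1 < 0)]
    constructor
    · nlinarith [h2, h3, mul_le_mul_of_nonneg_left h2 hx0.le]
    · linarith

lemma aux_pow {a : ℂ} (ha : ‖a‖ = 1) :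
    ∀ n : ℕ, ‖a ^ n - 1‖ ≤ n * ‖a - 1‖ := by
  intro n
  induction n with
  | zero => simp
  | succ k ih =>
    have he : a ^ (k+1) - 1 = a ^ k * (a - 1) + (a ^ k - 1) := by ring
    rw [he]
    calc ‖a ^ k * (a - 1) + (a ^ k - 1)‖
        ≤ ‖a ^ k * (a - 1)‖ + ‖a ^ k - 1‖ :=
          norm_add_le _ _
      _ ≤ ‖a - 1‖ + k * ‖a - 1‖ := by
          rw [norm_mul, norm_pow, ha, one_pow, one_mul]
          linarith
      _ = (k + 1 : ℕ) * ‖a - 1‖ := by push_cast; ring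

lemma aux_exp_asymp :
    Tendsto (fun t : ℝ => (Complex.exp (-(t:ℂ)^2/2) - 1 + (t:ℂ)^2/2) / (t:ℂ)^2)
      (nhdsWithin 0 {0}ᶜ) (nhds 0) := by
  have T0 : Tendsto (fun z : ℂ => (Complex.exp z - 1) / z) (nhdsWithin 0 {0}ᶜ) (nhds 1) := by
    have := hasDerivAt_iff_tendsto_slope.1 (Complex.hasDerivAt_exp 0)
    rw [Complex.exp_zero] at this
    refine this.congr (fun z => ?_)
    simp [slope_def_field, div_eq_inv_mul]
  have T1 : Tendsto (fun z : ℂ => (Complex.exp z - 1 - z) / z) (nhdsWithin 0 {0}ᶜ) (nhds 0) := by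
    have := T0.sub (tendsto_const_nhds (x := (1:ℂ)))
    rw [sub_self] at this
    refine (Tendsto.congr' ?_ this)
    filter_upwards [self_mem_nhdsWithin] with z hz
    have hz : z ≠ 0 := hz
    field_simp
  have Tm : Tendsto (fun t : ℝ => -(t:ℂ)^2/2) (nhdsWithin 0 {0}ᶜ) (nhdsWithin 0 {0}ᶜ) := by
    rw [tendsto_nhdsWithin_iff]
    constructor
    · have hc : Continuous (fun t : ℝ => -(t:ℂ)^2/2) := by continuity
      have := hc.tendsto 0
      simpa using this.mono_left nhdsWithin_le_nhds
    · filter_upwards [self_mem_nhdsWithin] with t ht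
      have ht : t ≠ 0 := ht
      simp only [Set.mem_compl_iff, Set.mem_singleton_iff]
      intro hcon
      field_simp at hcon
      have hc2 : (t:ℂ)^2 = 0 := by linear_combination -hcon
      exact ht (by simpa using hc2)
  have T2 := T1.comp Tm
  have T3 := T2.mul_const ((-1:ℂ)/2)
  rw [zero_mul] at T3
  refine Tendsto.congr' ?_ T3
  filter_upwards [self_mem_nhdsWithin] with t ht
  have ht : t ≠ 0 := ht
  have ht2 : (t:ℂ)^2 ≠ 0 := by
    simpa using pow_ne_zero 2 (Complex.ofReal_ne_zero.2 ht)
  simp only [Function.comp_apply]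
  field_simp
  ring

theorem charFun_funEq_is_gaussian_charFun
    (φ : ℝ → ℂ) (hcont : Continuous φ) (h0 : φ 0 = 1)
    (hne : ∀ t : ℝ, φ t ≠ 0)
    (heq : ∀ t : ℝ, φ (2 * t) = φ t ^ 3 * starRingEnd ℂ (φ t))
    (hexp : Filter.Tendsto (fun t : ℝ => (φ t - 1 + (t : ℂ) ^ 2 / 2) / (t : ℂ) ^ 2)
      (nhdsWithin 0 {0}ᶜ) (nhds 0)) :
    ∀ t : ℝ, φ t = Complex.exp (-(t : ℂ) ^ 2 / 2) := by
  set g : ℝ → ℂ := fun t => Complex.exp (-(t:ℂ)^2/2) with hg_def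
  have hgne : ∀ t : ℝ, g t ≠ 0 := fun t => Complex.exp_ne_zero _
  have hg0 : g 0 = 1 := by simp [hg_def, Complex.exp_zero]
  have hgconj : ∀ t : ℝ, starRingEnd ℂ (g t) = g t := by
    intro t
    simp only [hg_def, ← Complex.exp_conj, map_div₀, map_neg, map_pow, Complex.conj_ofReal,
      Complex.conj_ofNat]
  have hg2 : ∀ t : ℝ, g (2*t) = g t ^ 4 := by
    intro t
    simp only [hg_def]
    rw [← Complex.exp_nat_mul]
    congr 1
    push_cast
    ring
  set h : ℝ → ℂ := fun t => φ t / g t with hh_def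
  have hhne : ∀ t : ℝ, h t ≠ 0 := fun t => div_ne_zero (hne t) (hgne t)
  have hh0 : h 0 = 1 := by simp [hh_def, h0, hg0]
  have hhcont : Continuous h := hcont.div (by continuity) hgne
  have hfe : ∀ t : ℝ, h (2*t) = h t ^ 3 * starRingEnd ℂ (h t) := by
    intro t
    simp only [hh_def, heq t, hg2 t, map_div₀, hgconj t]
    field_simp
  -- the asymptotic for h
  have hten : Filter.Tendsto (fun t : ℝ => (h t - 1) / (t:ℂ)^2)
      (nhdsWithin 0 {0}ᶜ) (nhds 0) := by
    have hgt : Filter.Tendsto (fun t : ℝ => g t) (nhdsWithin 0 {0}ᶜ) (nhds 1) := by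
      have hc : Continuous g := by continuity
      have := hc.tendsto 0
      rw [hg0] at this
      exact this.mono_left nhdsWithin_le_nhds
    have T := (hexp.sub aux_exp_asymp).div hgt one_ne_zero
    rw [sub_self, zero_div] at T
    refine Filter.Tendsto.congr' ?_ T
    filter_upwards [self_mem_nhdsWithin] with t ht
    have ht : t ≠ 0 := ht
    have ht2 : (t:ℂ)^2 ≠ 0 := by
      simpa using pow_ne_zero 2 (Complex.ofReal_ne_zero.2 ht)
    have hgt0 := hgne t
    simp only [Pi.div_apply, Pi.sub_apply]
    rw [show Complex.exp (-(t:ℂ)^2/2) = g t from rfl]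
    show _ = (φ t / g t - 1) / _
    field_simp
    ring
  -- ε-δ form
  have hsmall : ∀ ε : ℝ, 0 < ε → ∃ δ : ℝ, 0 < δ ∧ ∀ t : ℝ, |t| < δ →
      ‖h t - 1‖ ≤ ε * t ^ 2 ∧ ‖h t - 1‖ ≤ 1/2 := by
    intro ε hε
    obtain ⟨δ₁, hδ₁, H1⟩ := Metric.tendsto_nhdsWithin_nhds.1 hten ε hε
    obtain ⟨δ₂, hδ₂, H2⟩ := Metric.continuousAt_iff.1 hhcont.continuousAt (1/2) (by norm_num)
    refine ⟨min δ₁ δ₂, lt_min hδ₁ hδ₂, fun t htlt => ?_⟩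
    rcases eq_or_ne t 0 with rfl | ht0
    · simp [hh0]
    · have ht1 : dist t 0 < δ₁ := by
        rw [Real.dist_eq, sub_zero]; exact htlt.trans_le (min_le_left _ _)
      have ht2 : dist t 0 < δ₂ := by
        rw [Real.dist_eq, sub_zero]; exact htlt.trans_le (min_le_right _ _)
      have e1 := H1 ht0 ht1
      have e2 := H2 ht2
      rw [dist_eq_norm, sub_zero] at e1
      rw [dist_eq_norm, hh0] at e2
      constructor
      · have : ‖(h t - 1) / (t:ℂ)^2‖ = ‖h t - 1‖ / t^2 := by
          rw [norm_div, norm_pow, Complex.norm_real, Real.norm_eq_abs, _root_.sq_abs]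
        rw [this] at e1
        have ht2pos : (0:ℝ) < t^2 := by positivity
        rw [div_lt_iff₀ ht2pos] at e1
        linarith
      · exact le_of_lt (by simpa [Complex.dist_eq] using e2)
  have h4eq : ∀ n : ℕ, ((2:ℝ)^n)^2 = 4^n := by
    intro n
    rw [← pow_mul, mul_comm, pow_mul]
    norm_num
  have hs2 : ∀ (t : ℝ) (n : ℕ), (t / 2^n)^2 = t^2 / 4^n := by
    intro t n
    rw [div_pow, h4eq]
  have hhalf : ∀ (t : ℝ) (n : ℕ), t / 2^n = 2 * (t / 2^(n+1)) := by
    intro t n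
    rw [pow_succ]
    field_simp
  -- modulus is 1
  have ha4 : ∀ t : ℝ, ‖h (2*t)‖ = ‖h t‖ ^ 4 := by
    intro t
    rw [hfe t, norm_mul, norm_pow, Complex.norm_conj]
    ring
  have hiter : ∀ (t : ℝ) (n : ℕ),
      Real.log (‖h t‖) = 4^n * Real.log (‖h (t / 2^n)‖) := by
    intro t n
    induction n with
    | zero => simp
    | succ n ih =>
      rw [ih, hhalf t n, ha4, Real.log_pow]
      push_cast
      ring
  have habs : ∀ t : ℝ, ‖h t‖ = 1 := by
    intro t
    have hpos : 0 < ‖h t‖ := norm_pos_iff.2 (hhne t)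
    have hlog : Real.log (‖h t‖) = 0 := by
      have key : ∀ ε : ℝ, 0 < ε → |Real.log (‖h t‖)| ≤ ε := by
        intro ε hε
        set ε' : ℝ := ε / (2 * (t^2 + 1)) with hε'def
        have hε' : 0 < ε' := by positivity
        obtain ⟨δ, hδ, H⟩ := hsmall ε' hε'
        obtain ⟨n, hn⟩ := pow_unbounded_of_one_lt (|t| / δ) (one_lt_two (α := ℝ))
        set s := t / 2^n with hs_def
        have h2n : (0:ℝ) < 2^n := by positivity
        have hslt : |s| < δ := by
          rw [hs_def, abs_div, abs_of_pos h2n, div_lt_iff₀ h2n]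
          have := (div_lt_iff₀ hδ).1 hn
          linarith
        obtain ⟨hb1, hb2⟩ := H s hslt
        have habsub : |‖h s‖ - 1| ≤ ‖h s - 1‖ := by
          simpa using abs_norm_sub_norm_le (h s) 1
        have hlog_s : |Real.log (‖h s‖)| ≤ 2 * (ε' * s^2) := by
          have e1 := aux_log (habsub.trans hb2)
          have e2 : |‖h s‖ - 1| ≤ ε' * s^2 := habsub.trans hb1
          linarith
        have hεeq : ε' * (2 * (t^2 + 1)) = ε := by
          rw [hε'def]
          field_simp
        rw [hiter t n, abs_mul, abs_of_pos (show (0:ℝ) < 4^n by positivity)]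
        calc (4:ℝ)^n * |Real.log (‖h s‖)|
            ≤ 4^n * (2 * (ε' * s^2)) := by
              exact mul_le_mul_of_nonneg_left hlog_s (by positivity)
          _ = 2 * ε' * t^2 := by
              rw [hs2]
              have h4n : (0:ℝ) < 4^n := by positivity
              field_simp
          _ ≤ ε := by nlinarith [mul_nonneg hε'.le (sq_nonneg t)]
      have hle : |Real.log (‖h t‖)| ≤ 0 :=
        le_of_forall_pos_le_add (fun ε hε => by simpa using key ε hε)
      exact abs_nonpos_iff.1 hle
    calc ‖h t‖ = Real.exp (Real.log (‖h t‖)) :=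
          (Real.exp_log hpos).symm
      _ = 1 := by rw [hlog, Real.exp_zero]
  -- phase
  have hconj : ∀ t : ℝ, starRingEnd ℂ (h t) = (h t)⁻¹ := by
    intro t
    have hm : h t * starRingEnd ℂ (h t) = 1 := by
      rw [Complex.mul_conj, Complex.normSq_eq_norm_sq, habs t]
      norm_num
    exact ((inv_eq_of_mul_eq_one_right hm)).symm
  have hsq : ∀ t : ℝ, h (2*t) = h t ^ 2 := by
    intro t
    rw [hfe t, hconj t]
    field_simp [hhne t]
  have hiter2 : ∀ (t : ℝ) (n : ℕ), h t = h (t / 2^n) ^ 2^n := by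
    intro t n
    induction n with
    | zero => simp
    | succ n ih =>
      rw [ih, hhalf t n, hsq, ← pow_mul, ← pow_succ']
  -- h ≡ 1
  have hone : ∀ t : ℝ, h t = 1 := by
    intro t
    have key : ∀ ε : ℝ, 0 < ε → ‖h t - 1‖ ≤ ε := by
      intro ε hε
      obtain ⟨δ, hδ, H⟩ := hsmall 1 one_pos
      obtain ⟨n, hn⟩ := pow_unbounded_of_one_lt (max (|t| / δ) (t^2 / ε)) (one_lt_two (α := ℝ))
      set s := t / 2^n with hs_def
      have h2n : (0:ℝ) < 2^n := by positivity
      have hslt : |s| < δ := by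
        rw [hs_def, abs_div, abs_of_pos h2n, div_lt_iff₀ h2n]
        have h1 : |t| / δ < 2^n := lt_of_le_of_lt (le_max_left _ _) hn
        have := (div_lt_iff₀ hδ).1 h1
        linarith
      obtain ⟨hb1, hb2⟩ := H s hslt
      have hp := aux_pow (habs s) (2^n)
      rw [hiter2 t n]
      calc ‖h s ^ 2^n - 1‖ ≤ (2^n : ℕ) * ‖h s - 1‖ := hp
        _ ≤ (2:ℝ)^n * (1 * s^2) := by
            push_cast
            exact mul_le_mul_of_nonneg_left hb1 (by positivity)
        _ = t^2 / 2^n := by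
            rw [one_mul, hs2, show (4:ℝ)^n = 2^n * 2^n by rw [← mul_pow]; norm_num]
            field_simp
        _ ≤ ε := by
            have h1 : t^2 / ε < 2^n := lt_of_le_of_lt (le_max_right _ _) hn
            have := (div_lt_iff₀ hε).1 h1
            rw [div_le_iff₀ h2n]
            nlinarith
    have hle : ‖h t - 1‖ ≤ 0 :=
      le_of_forall_pos_le_add (fun ε hε => by simpa using key ε hε)
    have : h t - 1 = 0 := by
      have := le_antisymm hle (norm_nonneg _)
      exact norm_eq_zero.1 this
    linear_combination this
  intro t
  have h1 : φ t / g t = 1 := hone t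
  rw [div_eq_one_iff_eq (hgne t)] at h1
  exact h1
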